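/- arXiv:1904.03527 — 5 statements merged into one kernel-verified Lean document; each statement's English description precedes it below -/
import Mathlib

section
/- Zak transform of a function of positive type in a semidirect product: suppose G = H ⋊ K with H abelian, α ∈ Ĥ, f ∈ L²(K) a unit vector, π = Ind_H^G α realized on L²(K) by (π(hx)f)(y) = (y·α)(h) f(x⁻¹y) for h ∈ H, x, y ∈ K, and g(w) = ⟨f, π(w)f⟩ for w ∈ G. Then for all β ∈ Ĥ and x ∈ K, (Z_r g)(β)(x) = |H| ∑_{y ∈ K, y·α = β} f(xy) conj(f(y)). -/
/-!
Unfolding `g`, the Zak transform at `x` becomes a double sum over `y ∈ K` and `h ∈ H`. After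
reindexing `y ↦ x y`, the inner sum over `H` pairs `β` with the conjugate of the character
`y⋅α`, so by character orthogonality it equals `|H|` when `y⋅α = β` and vanishes otherwise.
-/

open ComplexConjugate

theorem Circle.sum_coe_mul_conj_eq_ite {G : Type*} [Group G] [Fintype G]
    [DecidableEq (G →* Circle)] (χ β : G →* Circle) :
    ∑ g : G, (β g : ℂ) * conj (χ g : ℂ) = if χ = β then (Fintype.card G : ℂ) else 0 := by
  classical
  have hcoe : ∀ g, (β g : ℂ) * conj (χ g : ℂ) = Circle.coeHom.comp (β / χ) g := fun g => by
    change _ = ((β g * (χ g)⁻¹ : Circle) : ℂ)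
    rw [Circle.coe_mul, Circle.coe_inv_eq_conj]
  have hone : Circle.coeHom.comp (β / χ) = 1 ↔ χ = β := by
    rw [← MonoidHom.comp_one Circle.coeHom, MonoidHom.cancel_left Circle.coe_injective,
      div_eq_one, eq_comm]
  simp only [hcoe, sum_hom_units, hone, Nat.cast_ite, Nat.cast_zero]

theorem SemidirectProduct.sum_mul_conj_induced_inr_mul_inl {H K : Type*} [CommGroup H]
    [Group K] [Fintype K] (φ : K →* MulAut H) (α : H →* Circle) (f : K → ℂ)
    (π : (H ⋊[φ] K) → (K → ℂ) → (K → ℂ))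
    (hπ : ∀ (w : H ⋊[φ] K) (u : K → ℂ) (y : K),
      π w u y = (α ((φ y⁻¹) w.left) : ℂ) * u (w.right⁻¹ * y))
    (x : K) (h : H) :
    ∑ y : K, f y * conj (π (inr x * inl h) f y) =
      ∑ y : K, f (x * y) * conj (f y) * conj (α ((φ y⁻¹) h) : ℂ) := by
  rw [← Equiv.sum_comp (Equiv.mulLeft x)]
  refine Finset.sum_congr rfl fun y _ => ?_
  have hφ : (φ (x * y)⁻¹) ((φ x) h) = (φ y⁻¹) h := by
    rw [← MulAut.mul_apply, ← map_mul, mul_inv_rev, inv_mul_cancel_right]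
  simp only [hπ, left_inl, right_inl, left_inr, right_inr, mul_left, mul_right, mul_one,
    one_mul, Equiv.coe_mulLeft, inv_mul_cancel_left, hφ, map_mul]
  ring

theorem zak_posType_semidirect_general {H K : Type*} [CommGroup H] [Fintype H] [Group K] [Fintype K]
    [DecidableEq (H →* Circle)]
    (φ : K →* MulAut H) (α : H →* Circle) (f : K → ℂ)
    (π : (H ⋊[φ] K) → (K → ℂ) → (K → ℂ))
    (hπ : ∀ (w : H ⋊[φ] K) (u : K → ℂ) (y : K),
      π w u y = (α ((φ y⁻¹) w.left) : ℂ) * u (w.right⁻¹ * y))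
    (g : (H ⋊[φ] K) → ℂ)
    (hg : ∀ w, g w = ∑ y : K, f y * (starRingEnd ℂ) (π w f y))
    (β : H →* Circle) (x : K) :
    ∑ h : H, g (SemidirectProduct.inr x * SemidirectProduct.inl h) * (β h : ℂ) =
      (Fintype.card H : ℂ) *
        ∑ y ∈ Finset.univ.filter
            (fun y : K => α.comp (φ y⁻¹).toMonoidHom = β),
          f (x * y) * (starRingEnd ℂ) (f y) := by
  calc ∑ h : H, g (SemidirectProduct.inr x * SemidirectProduct.inl h) * (β h : ℂ)
      = ∑ y : K, f (x * y) * conj (f y) *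
          ∑ h : H, (β h : ℂ) * conj (α.comp (φ y⁻¹).toMonoidHom h : ℂ) := by
        simp_rw [hg, SemidirectProduct.sum_mul_conj_induced_inr_mul_inl φ α f π hπ,
          Finset.sum_mul, Finset.mul_sum]
        rw [Finset.sum_comm]
        refine Fintype.sum_congr _ _ fun y => Fintype.sum_congr _ _ fun h => ?_
        simp only [MonoidHom.comp_apply, MulEquiv.coe_toMonoidHom]
        ring
    _ = ∑ y : K, f (x * y) * conj (f y) *
          if α.comp (φ y⁻¹).toMonoidHom = β then (Fintype.card H : ℂ) else 0 := by
        simp_rw [Circle.sum_coe_mul_conj_eq_ite]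
    _ = _ := by
        rw [Finset.sum_filter, Finset.mul_sum]
        refine Fintype.sum_congr _ _ fun y => ?_
        split_ifs <;> ring

/-- Zak transform of a function of positive type in a semidirect product `G = H ⋊ K`:
if `π = Ind_H^G α` is realized on `L²(K)` by `(π (h x) f)(y) = (y⋅α)(h) f(x⁻¹ y)` with
`(y⋅α)(h) = α (φ y⁻¹ h)`, and `g w = ⟪f, π w f⟫` (linear in the first slot), then
`(Z_r g)(β)(x) = |H| ∑_{y ∈ K, y⋅α = β} f (x y) conj (f y)`. -/
theorem zak_posType_semidirect {H K : Type*} [CommGroup H] [Fintype H] [Group K] [Fintype K]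
    [DecidableEq (H →* Circle)]
    (φ : K →* MulAut H) (α : H →* Circle) (f : K → ℂ) (hf : ∑ y : K, ‖f y‖ ^ 2 = 1)
    (π : (H ⋊[φ] K) → (K → ℂ) → (K → ℂ))
    (hπ : ∀ (w : H ⋊[φ] K) (u : K → ℂ) (y : K),
      π w u y = (α ((φ y⁻¹) w.left) : ℂ) * u (w.right⁻¹ * y))
    (g : (H ⋊[φ] K) → ℂ)
    (hg : ∀ w, g w = ∑ y : K, f y * (starRingEnd ℂ) (π w f y))
    (β : H →* Circle) (x : K) :
    ∑ h : H, g (SemidirectProduct.inr x * SemidirectProduct.inl h) * (β h : ℂ) =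
      (Fintype.card H : ℂ) *
        ∑ y ∈ Finset.univ.filter
            (fun y : K => α.comp (φ y⁻¹).toMonoidHom = β),
          f (x * y) * (starRingEnd ℂ) (f y) :=
  zak_posType_semidirect_general φ α f π hπ g hg β x
end

section
/- Let q ≡ 3 (mod 4) be a prime power, q > 3. The set Q of nonzero quadratic residues in 𝔽_q is a (q, (q-1)/2, (q-3)/4)-difference set in (𝔽_q, +): for every b ∈ 𝔽_q, ∑_{c ∈ 𝔽_q} χ_Q(c)·χ_Q(c−b) equals (q−1)/2 if b = 0, and (q−3)/4 otherwise. -/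
open scoped BigOperators

open Finset

section Aux

variable {F : Type*} [Field F] [Fintype F] [DecidableEq F]

private lemma paley_char_ne_two (hq3 : Fintype.card F % 4 = 3) : ringChar F ≠ 2 := by
  intro h
  have := FiniteField.even_card_of_char_two h
  omega

private lemma paley_sq_eq (c : F) :
    (quadraticChar F c) ^ 2 = if c = 0 then 0 else 1 := by
  by_cases hc : c = 0
  · simp [hc, quadraticChar_zero]
  · rw [if_neg hc]; exact quadraticChar_sq_one hc

/-- The indicator of nonzero squares in terms of the quadratic character. -/
private lemma paley_indicator (c : F) :
    (if ∃ a : F, a ≠ 0 ∧ a ^ 2 = c then (1 : ℝ) else 0) =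
      ((quadraticChar F c + (quadraticChar F c) ^ 2 : ℤ) : ℝ) / 2 := by
  have hiff : (∃ a : F, a ≠ 0 ∧ a ^ 2 = c) ↔ quadraticChar F c = 1 := by
    constructor
    · rintro ⟨a, ha, rfl⟩
      exact quadraticChar_sq_one' ha
    · intro h
      have hc : c ≠ 0 := by
        intro h0
        rw [h0, quadraticChar_zero] at h
        omega
      obtain ⟨a, ha⟩ := (quadraticChar_one_iff_isSquare hc).mp h
      refine ⟨a, fun h0 => hc (by simp [ha, h0]), by rw [ha, sq]⟩
  by_cases hc : c = 0
  · simp [hc, hiff, quadraticChar_zero]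
  · rcases quadraticChar_dichotomy hc with h | h
    · rw [if_pos (hiff.mpr h), h]
      norm_num
    · rw [if_neg (fun hx => by rw [hiff.mp hx] at h; omega), h]
      norm_num

private lemma paley_sum_sq : ∑ c : F, (quadraticChar F c) ^ 2 = (Fintype.card F : ℤ) - 1 := by
  have : ∀ c : F, (quadraticChar F c) ^ 2 = 1 - (if c = 0 then 1 else 0) := by
    intro c; rw [paley_sq_eq]; by_cases hc : c = 0 <;> simp [hc]
  simp_rw [this]
  rw [Finset.sum_sub_distrib, Finset.sum_const, Finset.sum_ite_eq' Finset.univ (0 : F) (fun _ => (1 : ℤ))]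
  simp [Finset.card_univ]

private lemma paley_sum_shift (hq3 : Fintype.card F % 4 = 3) (b : F) :
    ∑ c : F, quadraticChar F (c - b) = 0 := by
  exact (Fintype.sum_equiv (Equiv.subRight b) (fun c => quadraticChar F (c - b))
    (fun c => quadraticChar F c) (fun c => rfl)).trans
    (quadraticChar_sum_zero (paley_char_ne_two hq3))

private lemma paley_S2 (hq3 : Fintype.card F % 4 = 3) (b : F) :
    ∑ c : F, quadraticChar F c * (quadraticChar F (c - b)) ^ 2 = -(quadraticChar F b) := by
  have h : ∀ c : F, quadraticChar F c * (quadraticChar F (c - b)) ^ 2 =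
      quadraticChar F c - (if c = b then quadraticChar F c else 0) := by
    intro c
    rw [paley_sq_eq]
    by_cases hc : c = b
    · simp [hc]
    · simp [hc, sub_ne_zero.mpr hc]
  simp_rw [h]
  rw [Finset.sum_sub_distrib, Finset.sum_ite_eq' Finset.univ b (fun c => quadraticChar F c),
    quadraticChar_sum_zero (paley_char_ne_two hq3)]
  simp

private lemma paley_S3 (hq3 : Fintype.card F % 4 = 3) (b : F) :
    ∑ c : F, (quadraticChar F c) ^ 2 * quadraticChar F (c - b) = -(quadraticChar F (-b)) := by
  have h : ∀ c : F, (quadraticChar F c) ^ 2 * quadraticChar F (c - b) =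
      quadraticChar F (c - b) - (if c = 0 then quadraticChar F (c - b) else 0) := by
    intro c
    rw [paley_sq_eq]
    by_cases hc : c = 0
    · simp [hc]
    · simp [hc]
  simp_rw [h]
  rw [Finset.sum_sub_distrib, Finset.sum_ite_eq' Finset.univ (0 : F)
    (fun c => quadraticChar F (c - b)), paley_sum_shift hq3 b]
  simp

private lemma paley_S4 {b : F} (hb : b ≠ 0) :
    ∑ c : F, (quadraticChar F c) ^ 2 * (quadraticChar F (c - b)) ^ 2 =
      (Fintype.card F : ℤ) - 2 := by
  have h : ∀ c : F, (quadraticChar F c) ^ 2 * (quadraticChar F (c - b)) ^ 2 =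
      1 - (if c = 0 then 1 else 0) - (if c = b then 1 else 0) := by
    intro c
    rw [paley_sq_eq, paley_sq_eq]
    by_cases hc : c = 0
    · simp [hc, hb, Ne.symm hb]
    · by_cases hc' : c = b
      · simp [hc, hc', sub_self, hb]
      · simp [hc, hc', sub_ne_zero.mpr hc']
  simp_rw [h]
  rw [Finset.sum_sub_distrib, Finset.sum_sub_distrib,
    Finset.sum_ite_eq' Finset.univ (0 : F) (fun _ => (1 : ℤ)),
    Finset.sum_ite_eq' Finset.univ b (fun _ => (1 : ℤ)), Finset.sum_const, Finset.card_univ]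
  simp; ring

private lemma paley_S1 (hq3 : Fintype.card F % 4 = 3) {b : F} (hb : b ≠ 0) :
    ∑ c : F, quadraticChar F c * quadraticChar F (c - b) = -1 := by
  classical
  have step1 : ∀ c : F, quadraticChar F c * quadraticChar F (c - b) =
      (quadraticChar F c) ^ 2 * quadraticChar F (1 - b * c⁻¹) := by
    intro c
    by_cases hc : c = 0
    · simp [hc, quadraticChar_zero]
    · have : c - b = c * (1 - b * c⁻¹) := by field_simp
      rw [this, map_mul, sq]
      ring
  have step2 : ∑ c : F, (quadraticChar F c) ^ 2 * quadraticChar F (1 - b * c⁻¹) =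
      ∑ y : F, (if y = 1 then 0 else 1) * quadraticChar F y := by
    refine Fintype.sum_equiv ⟨fun c => 1 - b * c⁻¹, fun y => b * (1 - y)⁻¹, ?_, ?_⟩ _ _
      (fun c => ?_)
    · intro c
      by_cases hc : c = 0
      · simp [hc]
      · field_simp
        rw [sub_sub_cancel, div_self hb]
    · intro y
      by_cases hy : y = 1
      · simp [hy]
      · have h1 : (1 : F) - y ≠ 0 := sub_ne_zero.mpr (Ne.symm hy)
        field_simp
        ring
    · simp only [Equiv.coe_fn_mk]
      rw [paley_sq_eq]
      by_cases hc : c = 0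
      · simp [hc]
      · have h1 : 1 - b * c⁻¹ ≠ 1 := by
          simp [sub_eq_self, hb, inv_ne_zero hc]
        simp [hc, h1]
  have step3 : ∑ y : F, (if y = 1 then 0 else 1) * quadraticChar F y = -1 := by
    have h : ∀ y : F, (if y = 1 then 0 else 1) * quadraticChar F y =
        quadraticChar F y - (if y = 1 then quadraticChar F y else 0) := by
      intro y
      by_cases hy : y = 1 <;> simp [hy]
    simp_rw [h]
    rw [Finset.sum_sub_distrib, Finset.sum_ite_eq' Finset.univ (1 : F)
      (fun y => quadraticChar F y), quadraticChar_sum_zero (paley_char_ne_two hq3)]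
    simp
  calc ∑ c : F, quadraticChar F c * quadraticChar F (c - b)
      = ∑ c : F, (quadraticChar F c) ^ 2 * quadraticChar F (1 - b * c⁻¹) := by
        exact Finset.sum_congr rfl (fun c _ => step1 c)
    _ = -1 := step2.trans step3

end Aux

/-- The nonzero quadratic residues form a `(q, (q-1)/2, (q-3)/4)`-difference set in
`(𝔽_q, +)` when `q ≡ 3 (mod 4)` and `q > 3`: for every `b`,
`∑_c χ_Q(c) χ_Q(c - b)` equals `(q-1)/2` if `b = 0` and `(q-3)/4` otherwise. -/
theorem paley_difference_set {F : Type*} [Field F] [Fintype F] [DecidableEq F]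
    (hq3 : Fintype.card F % 4 = 3) (hq : 3 < Fintype.card F) (b : F) :
    (∑ c : F,
        (if ∃ a : F, a ≠ 0 ∧ a ^ 2 = c then (1 : ℝ) else 0) *
        (if ∃ a : F, a ≠ 0 ∧ a ^ 2 = c - b then (1 : ℝ) else 0)) =
      if b = 0 then ((Fintype.card F : ℝ) - 1) / 2 else ((Fintype.card F : ℝ) - 3) / 4 := by
  by_cases hb : b = 0
  · -- diagonal case: the summand is the indicator of `Q` itself
    rw [if_pos hb]
    subst hb
    simp only [sub_zero]
    have hsq : ∀ c : F, (if ∃ a : F, a ≠ 0 ∧ a ^ 2 = c then (1 : ℝ) else 0) *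
        (if ∃ a : F, a ≠ 0 ∧ a ^ 2 = c then (1 : ℝ) else 0) =
        (if ∃ a : F, a ≠ 0 ∧ a ^ 2 = c then (1 : ℝ) else 0) := by
      intro c
      by_cases h : ∃ a : F, a ≠ 0 ∧ a ^ 2 = c <;> simp [h]
    simp_rw [hsq, paley_indicator]
    rw [← Finset.sum_div, ← Int.cast_sum, Finset.sum_add_distrib,
      quadraticChar_sum_zero (paley_char_ne_two hq3), paley_sum_sq]
    push_cast
    ring
  · rw [if_neg hb]
    simp_rw [paley_indicator]
    have hmul : ∀ x y : ℤ, ((x : ℝ) / 2) * ((y : ℝ) / 2) = ((x * y : ℤ) : ℝ) / 4 := by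
      intro x y; push_cast; ring
    simp_rw [hmul]
    rw [← Finset.sum_div, ← Int.cast_sum]
    have hexp : ∀ c : F,
        (quadraticChar F c + (quadraticChar F c) ^ 2) *
          (quadraticChar F (c - b) + (quadraticChar F (c - b)) ^ 2) =
        quadraticChar F c * quadraticChar F (c - b) +
          quadraticChar F c * (quadraticChar F (c - b)) ^ 2 +
          ((quadraticChar F c) ^ 2 * quadraticChar F (c - b) +
            (quadraticChar F c) ^ 2 * (quadraticChar F (c - b)) ^ 2) := by
      intro c; ring
    simp_rw [hexp]
    rw [Finset.sum_add_distrib, Finset.sum_add_distrib, Finset.sum_add_distrib,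
      paley_S1 hq3 hb, paley_S2 hq3 b, paley_S3 hq3 b, paley_S4 hb]
    have hneg : quadraticChar F (-b) = -(quadraticChar F b) := by
      rw [show (-b : F) = -1 * b by ring, map_mul,
        quadraticChar_neg_one_iff_not_isSquare.mpr
          (by rw [FiniteField.isSquare_neg_one_iff]; omega)]
      ring
    rw [hneg]
    push_cast
    ring
end

section
/- In the Heisenberg group mod d with π = Ind_H^G α_{0,1} realized on L²(ℤ_d) by (π(r^a s^b t^k) f)(t^m) = ω^{am+b} f(t^{m−k}) (suitable normalization), for a unit vector f ∈ L²(ℤ_d) with function of positive type g(w) = ⟨f, π(w)f⟩, the Zak transform satisfies (Z_r g)(α_{a,c})(t^h) = d²· f(t^{h−a})· conj(f(t^{−a}))· δ_{c,1} for all a, c, h ∈ ℤ_d. -/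
open scoped BigOperators
open Complex

/-- The automorphism of `ℤ_d × ℤ_d = ⟨r, s⟩` induced by conjugation by `t^k` in the
Heisenberg group mod `d`: `r^m s^n ↦ r^m s^{k m + n}`. -/
def heisAut (d : ℕ) (k : ZMod d) :
    Multiplicative (ZMod d × ZMod d) ≃* Multiplicative (ZMod d × ZMod d) :=
  AddEquiv.toMultiplicative
  { toFun := fun p => (p.1, k * p.1 + p.2)
    invFun := fun p => (p.1, p.2 - k * p.1)
    left_inv := by intro p; simp
    right_inv := by intro p; simp
    map_add' := by intro p q; ext <;> simp <;> ring }

/-- The action homomorphism defining the Heisenberg group mod `d` as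
`(ℤ_d × ℤ_d) ⋊ ℤ_d`. -/
def heisφ (d : ℕ) :
    Multiplicative (ZMod d) →* MulAut (Multiplicative (ZMod d × ZMod d)) where
  toFun k := heisAut d (Multiplicative.toAdd k)
  map_one' := by
    ext p <;> simp [heisAut, AddEquiv.toMultiplicative]
  map_mul' := by
    intro k l
    ext p
    simp [heisAut, AddEquiv.toMultiplicative]
    show Multiplicative.toAdd (k * l) * (Multiplicative.toAdd p).1 + (Multiplicative.toAdd p).2 =
      Multiplicative.toAdd k * (Multiplicative.toAdd p).1 +
        (Multiplicative.toAdd l * (Multiplicative.toAdd p).1 + (Multiplicative.toAdd p).2)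
    simp only [toAdd_mul]
    ring

/-- The Heisenberg group mod `d`:
`⟨r,s,t : r^d = s^d = t^d = [r,s] = [t,s] = 1, t r t⁻¹ = r s⟩`, realized as the
semidirect product `H ⋊ K` with `H = ⟨r,s⟩ ≅ ℤ_d × ℤ_d` and `K = ⟨t⟩ ≅ ℤ_d`.
The element `r^m s^n t^k` corresponds to `inl (ofAdd (m, n)) * inr (ofAdd k)`. -/
def Heis (d : ℕ) : Type :=
  Multiplicative (ZMod d × ZMod d) ⋊[heisφ d] Multiplicative (ZMod d)

instance (d : ℕ) : Group (Heis d) :=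
  inferInstanceAs (Group (Multiplicative (ZMod d × ZMod d) ⋊[heisφ d] Multiplicative (ZMod d)))

/-- `r^m s^n ∈ H` as an element of the Heisenberg group. -/
def heisH {d : ℕ} (p : ZMod d × ZMod d) : Heis d :=
  SemidirectProduct.inl (Multiplicative.ofAdd p)

/-- `t^h ∈ K` as an element of the Heisenberg group. -/
def heisK {d : ℕ} (h : ZMod d) : Heis d :=
  SemidirectProduct.inr (Multiplicative.ofAdd h)


lemma zak_aux_prim (d : ℕ) [NeZero d] (ω : ℂ)
    (hω : ω = Complex.exp (2 * Real.pi * Complex.I / d)) : IsPrimitiveRoot ω d := by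
  rw [hω]; exact Complex.isPrimitiveRoot_exp d (NeZero.ne d)

lemma zak_pow_val_add (d : ℕ) [NeZero d] (ω : ℂ)
    (hω : ω = Complex.exp (2 * Real.pi * Complex.I / d)) (x y : ZMod d) :
    ω ^ (x + y).val = ω ^ x.val * ω ^ y.val := by
  have hd : ω ^ d = 1 := (zak_aux_prim d ω hω).pow_eq_one
  have h1 : ω ^ (x.val + y.val) = ω ^ ((x.val + y.val) % d) := by
    conv_lhs => rw [← Nat.div_add_mod (x.val + y.val) d]
    rw [pow_add, pow_mul, hd, one_pow, one_mul]
  rw [ZMod.val_add, ← h1, pow_add]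

lemma zak_conj_pow_val (d : ℕ) [NeZero d] (ω : ℂ)
    (hω : ω = Complex.exp (2 * Real.pi * Complex.I / d)) (x : ZMod d) :
    (starRingEnd ℂ) (ω ^ x.val) = ω ^ (-x).val := by
  have habs : ‖ω‖ = 1 := by
    rw [hω, Complex.norm_exp]
    norm_num [Complex.div_re]
  have h1 : ω ^ (-x).val * ω ^ x.val = 1 := by
    rw [← zak_pow_val_add d ω hω, neg_add_cancel]
    simp [ZMod.val_zero]
  have h2 : (starRingEnd ℂ) (ω ^ x.val) * ω ^ x.val = 1 := by
    rw [mul_comm, Complex.mul_conj, ← Complex.ofReal_one]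
    rw [Complex.ofReal_inj, map_pow, Complex.normSq_eq_norm_sq, habs]
    norm_num
  have hne : ω ^ x.val ≠ 0 := by
    intro h0; rw [h0, mul_zero] at h1; exact one_ne_zero h1.symm
  exact mul_right_cancel₀ hne (h2.trans h1.symm)

lemma zak_sum_char (d : ℕ) [NeZero d] (ω : ℂ)
    (hω : ω = Complex.exp (2 * Real.pi * Complex.I / d)) (y : ZMod d) :
    ∑ x : ZMod d, ω ^ (x * y).val = if y = 0 then (d : ℂ) else 0 := by
  by_cases hy : y = 0
  · simp [hy, ZMod.val_zero, ZMod.card]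
  · rw [if_neg hy]
    have hne1 : ω ^ y.val ≠ 1 := by
      refine (zak_aux_prim d ω hω).pow_ne_one_of_pos_of_lt ?_ (ZMod.val_lt y)
      exact fun h0 => hy ((ZMod.val_eq_zero y).mp h0)
    have hshift : ω ^ y.val * ∑ x : ZMod d, ω ^ (x * y).val
        = ∑ x : ZMod d, ω ^ (x * y).val := by
      rw [Finset.mul_sum]
      refine Fintype.sum_bijective (fun x : ZMod d => x + 1)
        (Equiv.addRight (1 : ZMod d)).bijective _ _ ?_
      intro x
      rw [← zak_pow_val_add d ω hω]
      congr 1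
      ring
    have h0 : (ω ^ y.val - 1) * ∑ x : ZMod d, ω ^ (x * y).val = 0 := by
      rw [sub_mul, one_mul, hshift, sub_self]
    rcases mul_eq_zero.mp h0 with h | h
    · exact absurd (sub_eq_zero.mp h) hne1
    · exact h

/-- In the Heisenberg group mod `d`, let `π = Ind_H^G α_{0,1}` be realized on `L²(ℤ_d)` by
`(π (r^a s^b t^k) f)(t^m) = ω^{b - a m} f(t^{m-k})` (the normalization for which
`(π (h x) f)(y) = (y⋅α_{0,1})(h) f(x⁻¹ y)`), and let `g w = ⟪f, π w f⟫` be the function of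
positive type of a unit vector `f ∈ L²(ℤ_d)`.  Then the Zak transform satisfies
`(Z_r g)(α_{a,c})(t^h) = d² f(t^{h-a}) conj (f (t^{-a})) δ_{c,1}`. -/
theorem zak_posType_heisenberg (d : ℕ) [NeZero d] (hd : 2 ≤ d)
    (ω : ℂ) (hω : ω = Complex.exp (2 * Real.pi * Complex.I / d))
    (f : ZMod d → ℂ) (hf : ∑ m : ZMod d, ‖f m‖ ^ 2 = 1)
    (π : Heis d → (ZMod d → ℂ) → (ZMod d → ℂ))
    (hπ : ∀ (w : Heis d) (u : ZMod d → ℂ) (m : ZMod d),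
      π w u m =
        ω ^ ((Multiplicative.toAdd w.left).2 - (Multiplicative.toAdd w.left).1 * m).val *
          u (m - Multiplicative.toAdd w.right))
    (g : Heis d → ℂ)
    (hg : ∀ w, g w = ∑ m : ZMod d, f m * (starRingEnd ℂ) (π w f m))
    (a c h : ZMod d) :
    ∑ p : ZMod d × ZMod d, g (heisK h * heisH p) * ω ^ (a * p.1 + c * p.2).val =
      (d : ℂ) ^ 2 * f (h - a) * (starRingEnd ℂ) (f (-a)) * (if c = 1 then 1 else 0) := by
  have hleft : ∀ p : ZMod d × ZMod d,
      (Multiplicative.toAdd ((heisK h * heisH p : Heis d).left)) = (p.1, h * p.1 + p.2) := by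
    intro p
    show Multiplicative.toAdd ((SemidirectProduct.inr (Multiplicative.ofAdd h) *
      SemidirectProduct.inl (Multiplicative.ofAdd p) :
      Multiplicative (ZMod d × ZMod d) ⋊[heisφ d] Multiplicative (ZMod d)).left) = _
    erw [SemidirectProduct.mul_left]
    erw [SemidirectProduct.left_inr, SemidirectProduct.right_inr, SemidirectProduct.left_inl]
    simp [heisφ, heisAut, AddEquiv.toMultiplicative]
  have hright : ∀ p : ZMod d × ZMod d,
      (Multiplicative.toAdd ((heisK h * heisH p : Heis d).right)) = h := by
    intro p
    show Multiplicative.toAdd ((SemidirectProduct.inr (Multiplicative.ofAdd h) *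
      SemidirectProduct.inl (Multiplicative.ofAdd p) :
      Multiplicative (ZMod d × ZMod d) ⋊[heisφ d] Multiplicative (ZMod d)).right) = _
    erw [SemidirectProduct.mul_right]
    simp
  have step1 : ∀ p : ZMod d × ZMod d,
      g (heisK h * heisH p) * ω ^ (a * p.1 + c * p.2).val
      = ∑ m : ZMod d, f m * (starRingEnd ℂ) (f (m - h)) *
          (ω ^ (p.1 * (m - h + a)).val * ω ^ (p.2 * (c - 1)).val) := by
    intro p
    rw [hg, Finset.sum_mul]
    refine Finset.sum_congr rfl fun m _ => ?_
    rw [hπ, hleft, hright]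
    rw [map_mul, zak_conj_pow_val d ω hω]
    have key : ω ^ (-((h * p.1 + p.2) - p.1 * m)).val * ω ^ (a * p.1 + c * p.2).val
        = ω ^ (p.1 * (m - h + a)).val * ω ^ (p.2 * (c - 1)).val := by
      rw [← zak_pow_val_add d ω hω, ← zak_pow_val_add d ω hω]
      congr 1
      ring
    calc f m * (ω ^ (-((h * p.1 + p.2) - p.1 * m)).val * (starRingEnd ℂ) (f (m - h))) *
          ω ^ (a * p.1 + c * p.2).val
        = f m * (starRingEnd ℂ) (f (m - h)) *
            (ω ^ (-((h * p.1 + p.2) - p.1 * m)).val * ω ^ (a * p.1 + c * p.2).val) := by ring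
      _ = _ := by rw [key]
  rw [Finset.sum_congr rfl fun p _ => step1 p]
  rw [Fintype.sum_prod_type]
  have swap1 : ∀ x : ZMod d,
      (∑ y : ZMod d, ∑ m : ZMod d, f m * (starRingEnd ℂ) (f (m - h)) *
        (ω ^ (x * (m - h + a)).val * ω ^ (y * (c - 1)).val))
      = ∑ m : ZMod d, ∑ y : ZMod d, f m * (starRingEnd ℂ) (f (m - h)) *
        (ω ^ (x * (m - h + a)).val * ω ^ (y * (c - 1)).val) := fun x =>
    Finset.sum_comm -- dummy
  rw [Finset.sum_congr rfl fun x _ => swap1 x, Finset.sum_comm]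
  have inner : ∀ m : ZMod d,
      (∑ x : ZMod d, ∑ y : ZMod d, f m * (starRingEnd ℂ) (f (m - h)) *
        (ω ^ (x * (m - h + a)).val * ω ^ (y * (c - 1)).val))
      = f m * (starRingEnd ℂ) (f (m - h)) *
          ((∑ x : ZMod d, ω ^ (x * (m - h + a)).val) *
           (∑ y : ZMod d, ω ^ (y * (c - 1)).val)) := by
    intro m
    rw [Finset.sum_mul_sum, Finset.mul_sum]
    exact Finset.sum_congr rfl fun x _ => (Finset.mul_sum _ _ _).symm
  rw [Finset.sum_congr rfl fun m _ => inner m]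
  by_cases hc : c = 1
  · have hc0 : c - 1 = 0 := by rw [hc, sub_self]
    rw [if_pos hc]
    have sum2 : (∑ y : ZMod d, ω ^ (y * (c - 1)).val) = (d : ℂ) := by
      rw [zak_sum_char d ω hω, if_pos hc0]
    rw [sum2]
    have step : ∀ m : ZMod d,
        f m * (starRingEnd ℂ) (f (m - h)) *
          ((∑ x : ZMod d, ω ^ (x * (m - h + a)).val) * (d : ℂ))
        = if m = h - a then (d : ℂ) ^ 2 * f (h - a) * (starRingEnd ℂ) (f (-a)) else 0 := by
      intro m
      rw [zak_sum_char d ω hω]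
      have hiff : m - h + a = 0 ↔ m = h - a := by
        constructor
        · intro h0; have := sub_eq_zero.mp (by rw [← h0]; ring : m - (h - a) = 0); exact this
        · intro h0; rw [h0]; ring
      by_cases hm : m = h - a
      · rw [if_pos (hiff.mpr hm), if_pos hm, hm]
        have : h - a - h = -a := by ring
        rw [this]; ring
      · rw [if_neg (fun h0 => hm (hiff.mp h0)), if_neg hm]; ring
    rw [Finset.sum_congr rfl fun m _ => step m, Finset.sum_ite_eq' Finset.univ (h - a)]
    rw [if_pos (Finset.mem_univ _)]
    ring
  · have hc0 : c - 1 ≠ 0 := sub_ne_zero.mpr hc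
    rw [if_neg hc]
    have sum2 : (∑ y : ZMod d, ω ^ (y * (c - 1)).val) = 0 := by
      rw [zak_sum_char d ω hω, if_neg hc0]
    rw [sum2]
    simp
end

section
/- Let π be a unitary representation of a finite group G on ℂ^d, f a unit vector with projective stabilizer L, g(x) = ⟨f, π(x)f⟩, and suppose f is cyclic (the orbit {π(x)f : x ∈ G} spans ℂ^d). Fix a transversal {x_j}_{j∈[n]} of G/L where n = |G|/|L|. If |g(x)|² = (n−d)/(d(n−1)) for all x ∉ L, then {π(x_j) f}_{j∈[n]} is an equiangular tight frame for ℂ^d. -/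
open scoped BigOperators InnerProductSpace

private lemma mulconj (z : ℂ) : z * (starRingEnd ℂ) z = ((‖z‖ ^ 2 : ℝ) : ℂ) := by
  rw [Complex.mul_conj, Complex.normSq_eq_norm_sq]

private lemma conjmul (z : ℂ) : (starRingEnd ℂ) z * z = ((‖z‖ ^ 2 : ℝ) : ℂ) := by
  rw [mul_comm]; exact mulconj z

private lemma inner_self_ofReal {E : Type*} [NormedAddCommGroup E] [InnerProductSpace ℂ E]
    (x : E) : ⟪x, x⟫_ℂ = ((‖x‖ ^ 2 : ℝ) : ℂ) := by
  rw [inner_self_eq_norm_sq_to_K]; norm_cast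

private lemma norm_sq_eq_re_inner {E : Type*} [NormedAddCommGroup E] [InnerProductSpace ℂ E]
    (x : E) : ‖x‖ ^ 2 = (⟪x, x⟫_ℂ).re := (inner_self_eq_norm_sq (𝕜 := ℂ) x).symm

private lemma norm_sub_sq' {E : Type*} [NormedAddCommGroup E] [InnerProductSpace ℂ E]
    (x y : E) : ‖x - y‖ ^ 2 = ‖x‖ ^ 2 - 2 * (⟪x, y⟫_ℂ).re + ‖y‖ ^ 2 :=
  norm_sub_sq (𝕜 := ℂ) x y

private lemma parseval_sq {E : Type*} [NormedAddCommGroup E] [InnerProductSpace ℂ E]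
    [FiniteDimensional ℂ E] {d : ℕ} (b : OrthonormalBasis (Fin d) ℂ E) (u : E) :
    ∑ k, ‖⟪u, b k⟫_ℂ‖ ^ 2 = ‖u‖ ^ 2 := by
  have h := b.sum_inner_mul_inner u u
  have h2 : ∑ k, (⟪u, b k⟫_ℂ * ⟪b k, u⟫_ℂ) = ∑ k, ((‖⟪u, b k⟫_ℂ‖ ^ 2 : ℝ) : ℂ) := by
    refine Finset.sum_congr rfl fun k _ => ?_
    rw [← inner_conj_symm (b k) u, mulconj]
  rw [h2, inner_self_ofReal, ← Complex.ofReal_sum] at h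
  exact Complex.ofReal_inj.mp h

theorem tight_of_gram {E : Type*} [NormedAddCommGroup E] [InnerProductSpace ℂ E]
    [FiniteDimensional ℂ E] {d n : ℕ} (hd : Module.finrank ℂ E = d) (hd0 : 0 < d)
    (v : Fin n → E)
    (hgram : ∑ i, ∑ j, ‖⟪v i, v j⟫_ℂ‖ ^ 2 = (n : ℝ) ^ 2 / d)
    (htr : ∑ j, (‖v j‖ : ℝ) ^ 2 = (n : ℝ)) :
    ∀ w : E, ∑ j, ‖⟪v j, w⟫_ℂ‖ ^ 2 = ((n : ℝ) / d) * ‖w‖ ^ 2 := by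
  classical
  have hdR : (d : ℝ) ≠ 0 := Nat.cast_ne_zero.mpr hd0.ne'
  let b : OrthonormalBasis (Fin d) ℂ E := (stdOrthonormalBasis ℂ E).reindex (finCongr hd)
  set c : ℝ := (n : ℝ) / d with hc
  set S : E → E := fun w => ∑ j, ⟪v j, w⟫_ℂ • v j with hS
  have hB : ∑ k, ‖S (b k)‖ ^ 2 = (n : ℝ) ^ 2 / d := by
    have h1 : ∀ k, (‖S (b k)‖ ^ 2 : ℝ)
        = (∑ i, ∑ j, (⟪v j, b k⟫_ℂ * ⟪b k, v i⟫_ℂ) * ⟪v i, v j⟫_ℂ).re := by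
      intro k
      rw [norm_sq_eq_re_inner (S (b k))]
      congr 1
      simp only [hS, sum_inner, inner_sum, inner_smul_left, inner_smul_right, Finset.mul_sum]
      rw [Finset.sum_comm]
      refine Finset.sum_congr rfl fun i _ => Finset.sum_congr rfl fun j _ => ?_
      rw [← inner_conj_symm (b k) (v i)]
      ring
    calc ∑ k, ‖S (b k)‖ ^ 2
        = (∑ k, ∑ i, ∑ j, (⟪v j, b k⟫_ℂ * ⟪b k, v i⟫_ℂ) * ⟪v i, v j⟫_ℂ).re := by
          rw [Complex.re_sum]; exact Finset.sum_congr rfl fun k _ => h1 k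
      _ = (∑ i, ∑ j, (∑ k, ⟪v j, b k⟫_ℂ * ⟪b k, v i⟫_ℂ) * ⟪v i, v j⟫_ℂ).re := by
          rw [Finset.sum_comm]
          congr 1
          refine Finset.sum_congr rfl fun i _ => ?_
          rw [Finset.sum_comm]
          refine Finset.sum_congr rfl fun j _ => ?_
          rw [Finset.sum_mul]
      _ = (∑ i, ∑ j, ((‖⟪v i, v j⟫_ℂ‖ ^ 2 : ℝ) : ℂ)).re := by
          congr 1
          refine Finset.sum_congr rfl fun i _ => Finset.sum_congr rfl fun j _ => ?_
          rw [b.sum_inner_mul_inner, ← inner_conj_symm (v i) (v j), mulconj,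
            RCLike.norm_conj]
      _ = ∑ i, ∑ j, ‖⟪v i, v j⟫_ℂ‖ ^ 2 := by
          rw [Complex.re_sum]
          refine Finset.sum_congr rfl fun i _ => ?_
          rw [Complex.re_sum]
          exact Finset.sum_congr rfl fun j _ => Complex.ofReal_re _
      _ = (n : ℝ) ^ 2 / d := hgram
  have hC : ∑ k, (⟪S (b k), b k⟫_ℂ).re = (n : ℝ) := by
    have h1 : ∀ k, (⟪S (b k), b k⟫_ℂ).re = ∑ j, ‖⟪v j, b k⟫_ℂ‖ ^ 2 := by
      intro k
      simp only [hS, sum_inner, inner_smul_left]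
      rw [Complex.re_sum]
      refine Finset.sum_congr rfl fun j _ => ?_
      rw [conjmul]
      exact Complex.ofReal_re _
    calc ∑ k, (⟪S (b k), b k⟫_ℂ).re = ∑ k, ∑ j, ‖⟪v j, b k⟫_ℂ‖ ^ 2 :=
          Finset.sum_congr rfl fun k _ => h1 k
      _ = ∑ j, ∑ k, ‖⟪v j, b k⟫_ℂ‖ ^ 2 := Finset.sum_comm
      _ = ∑ j, (‖v j‖ : ℝ) ^ 2 := Finset.sum_congr rfl fun j _ => parseval_sq b (v j)
      _ = (n : ℝ) := htr
  have hA : ∑ k, ‖S (b k) - (c : ℂ) • b k‖ ^ 2 = 0 := by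
    have h1 : ∀ k, ‖S (b k) - (c : ℂ) • b k‖ ^ 2
        = ‖S (b k)‖ ^ 2 - 2 * c * (⟪S (b k), b k⟫_ℂ).re + c ^ 2 := by
      intro k
      rw [norm_sub_sq', inner_smul_right]
      have hnb : ‖(c : ℂ) • b k‖ ^ 2 = c ^ 2 := by
        rw [norm_smul, b.orthonormal.1 k, mul_one, Complex.norm_real, Real.norm_eq_abs,
          sq_abs]
      rw [hnb, Complex.re_ofReal_mul]
      ring
    rw [Finset.sum_congr rfl fun k _ => h1 k, Finset.sum_add_distrib, Finset.sum_sub_distrib,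
      ← Finset.mul_sum, hB, hC, Finset.sum_const, Finset.card_univ, Fintype.card_fin,
      nsmul_eq_mul, hc]
    field_simp
    ring
  have hSb : ∀ k, S (b k) = (c : ℂ) • b k := by
    intro k
    have h0 := (Finset.sum_eq_zero_iff_of_nonneg (fun k _ => sq_nonneg _)).mp hA k
      (Finset.mem_univ k)
    rw [sq_eq_zero_iff, norm_eq_zero, sub_eq_zero] at h0
    exact h0
  have hSw : ∀ w : E, S w = (c : ℂ) • w := by
    intro w
    conv_lhs => rw [← b.sum_repr' w]
    have hlin : S (∑ k, ⟪b k, w⟫_ℂ • b k) = ∑ k, ⟪b k, w⟫_ℂ • S (b k) := by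
      simp only [hS, inner_sum, inner_smul_right, Finset.sum_smul, Finset.smul_sum, smul_smul]
      exact Finset.sum_comm
    rw [hlin]
    calc ∑ k, ⟪b k, w⟫_ℂ • S (b k) = ∑ k, (c : ℂ) • (⟪b k, w⟫_ℂ • b k) := by
          refine Finset.sum_congr rfl fun k _ => ?_
          rw [hSb k, smul_smul, smul_smul, mul_comm]
      _ = (c : ℂ) • ∑ k, ⟪b k, w⟫_ℂ • b k := (Finset.smul_sum).symm
      _ = (c : ℂ) • w := by rw [b.sum_repr']
  intro w
  have h1 : ⟪w, S w⟫_ℂ = ((∑ j, ‖⟪v j, w⟫_ℂ‖ ^ 2 : ℝ) : ℂ) := by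
    simp only [hS, inner_sum, inner_smul_right]
    rw [Complex.ofReal_sum]
    refine Finset.sum_congr rfl fun j _ => ?_
    rw [← inner_conj_symm w (v j), mulconj]
  have h2 : ((c * ‖w‖ ^ 2 : ℝ) : ℂ) = ((∑ j, ‖⟪v j, w⟫_ℂ‖ ^ 2 : ℝ) : ℂ) := by
    rw [← h1, hSw w, inner_smul_right, inner_self_ofReal]
    push_cast
    ring
  exact (Complex.ofReal_inj.mp h2).symm


/-- ETF from a group orbit: let `π` be a unitary representation of a finite group `G` on a
`d`-dimensional complex Hilbert space, `f` a cyclic unit vector with projective stabilizer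
`L`, function of positive type `g x = ⟪f, π x f⟫`, and `{x j}` a transversal of `G/L` with
`n = |G|/|L|` elements.  If `‖g w‖² = (n-d)/(d(n-1))` for all `w ∉ L`, then
`{π (x j) f}` is an equiangular tight frame. -/
theorem etf_from_orbit {G E : Type*} [Group G] [Finite G]
    [NormedAddCommGroup E] [InnerProductSpace ℂ E] [FiniteDimensional ℂ E]
    {d n : ℕ} (hd : Module.finrank ℂ E = d)
    (π : G →* (E ≃ₗᵢ[ℂ] E)) (f : E) (hf : ‖f‖ = 1)
    (L : Set G) (hL : L = {x : G | ∃ c : ℂ, (π x) f = c • f})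
    (g : G → ℂ) (hg : ∀ x, g x = ⟪f, (π x) f⟫_ℂ)
    (hcyc : Submodule.span ℂ (Set.range fun x : G => (π x) f) = ⊤)
    (x : Fin n → G)
    (htrans : ∀ w : G, ∃! j : Fin n, ∃ l ∈ L, w = x j * l)
    (hn : n = Nat.card G / Nat.card L)
    (hang : ∀ w ∉ L, ‖g w‖ ^ 2 = ((n : ℝ) - d) / (d * ((n : ℝ) - 1))) :
    (∀ v : E, ∑ j, ‖(⟪(π (x j)) f, v⟫_ℂ)‖ ^ 2 = ((n : ℝ) / d) * ‖v‖ ^ 2) ∧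
    (∀ i j, i ≠ j →
      ‖(⟪(π (x i)) f, (π (x j)) f⟫_ℂ)‖ =
        Real.sqrt (((n : ℝ) - d) / (d * ((n : ℝ) - 1)))) := by
  classical
  have hmul : ∀ a b : G, (π a) ((π b) f) = (π (a * b)) f := fun a b => by
    rw [map_mul]; rfl
  have hone : (1 : G) ∈ L := by rw [hL]; exact ⟨1, by simp⟩
  have hvnorm : ∀ w : G, ‖(π w) f‖ = 1 := fun w => by rw [(π w).norm_map]; exact hf
  have hinner : ∀ i j : Fin n, ⟪(π (x i)) f, (π (x j)) f⟫_ℂ = g ((x i)⁻¹ * x j) := by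
    intro i j
    rw [hg]
    calc ⟪(π (x i)) f, (π (x j)) f⟫_ℂ
        = ⟪(π (x i)) f, (π (x i)) ((π ((x i)⁻¹ * x j)) f)⟫_ℂ := by
          rw [hmul, mul_inv_cancel_left]
      _ = ⟪f, (π ((x i)⁻¹ * x j)) f⟫_ℂ := (π (x i)).inner_map_map _ _
  have hnotL : ∀ i j : Fin n, i ≠ j → (x i)⁻¹ * x j ∉ L := by
    intro i j hij hmem
    apply hij
    obtain ⟨k, -, huniq⟩ := htrans (x j)
    have h1 : ∃ l ∈ L, x j = x i * l := ⟨_, hmem, by group⟩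
    have h2 : ∃ l ∈ L, x j = x j * l := ⟨1, hone, by group⟩
    exact (huniq i h1).trans (huniq j h2).symm
  have hoff : ∀ i j : Fin n, i ≠ j →
      ‖⟪(π (x i)) f, (π (x j)) f⟫_ℂ‖ ^ 2 = ((n : ℝ) - d) / (d * ((n : ℝ) - 1)) := by
    intro i j hij
    rw [hinner]
    exact hang _ (hnotL i j hij)
  have hf0 : f ≠ 0 := by intro h; rw [h, norm_zero] at hf; norm_num at hf
  have hd0 : 0 < d := by
    have : Nontrivial E := nontrivial_of_ne f 0 hf0
    rw [← hd]
    exact Module.finrank_pos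
  have hdR : (d : ℝ) ≠ 0 := Nat.cast_ne_zero.mpr hd0.ne'
  have hn1 : n = 1 → d = 1 := by
    intro h1
    subst h1
    have hsub : Set.range (fun w : G => (π w) f) ⊆
        ↑(Submodule.span ℂ {(π (x 0)) f}) := by
      rintro - ⟨w, rfl⟩
      obtain ⟨j, ⟨l, hl, hw⟩, -⟩ := htrans w
      rw [hL] at hl
      obtain ⟨cc, hcc⟩ := hl
      have hwf : (π w) f = cc • (π (x j)) f := by
        rw [hw, ← hmul, hcc, map_smul]
      show (π w) f ∈ (Submodule.span ℂ {(π (x 0)) f} : Submodule ℂ E)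
      rw [hwf, Fin.eq_zero j]
      exact Submodule.smul_mem _ _ (Submodule.mem_span_singleton_self _)
    have htop : (⊤ : Submodule ℂ E) ≤ Submodule.span ℂ {(π (x 0)) f} := by
      rw [← hcyc]; exact Submodule.span_le.mpr hsub
    have hsp : Submodule.span ℂ {(π (x 0)) f} = ⊤ := le_antisymm le_top htop
    have hv0 : (π (x 0)) f ≠ 0 := by
      intro h
      have h2 := hvnorm (x 0)
      rw [h, norm_zero] at h2
      norm_num at h2
    have hv0span : Module.finrank ℂ
        (Submodule.span ℂ {(π (x 0)) f} : Submodule ℂ E) = 1 :=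
      finrank_span_singleton hv0
    rw [hsp] at hv0span
    rw [← hd, ← finrank_top ℂ E]
    exact hv0span
  have hdiag : ∀ i : Fin n, ‖⟪(π (x i)) f, (π (x i)) f⟫_ℂ‖ ^ 2 = 1 := by
    intro i
    rw [inner_self_ofReal, hvnorm (x i)]
    norm_num
  have hrow : ∀ i : Fin n, ∑ j, ‖⟪(π (x i)) f, (π (x j)) f⟫_ℂ‖ ^ 2
      = 1 + ((n : ℝ) - 1) * (((n : ℝ) - d) / (d * ((n : ℝ) - 1))) := by
    intro i
    rw [← Finset.add_sum_erase _ _ (Finset.mem_univ i), hdiag i]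
    congr 1
    have hterm : ∀ j ∈ Finset.univ.erase i, ‖⟪(π (x i)) f, (π (x j)) f⟫_ℂ‖ ^ 2
        = ((n : ℝ) - d) / (d * ((n : ℝ) - 1)) := fun j hj =>
      hoff i j (Finset.ne_of_mem_erase hj).symm
    rw [Finset.sum_congr rfl hterm, Finset.sum_const,
      Finset.card_erase_of_mem (Finset.mem_univ i), Finset.card_univ, Fintype.card_fin,
      nsmul_eq_mul]
    congr 1
    have hpos : 1 ≤ n := i.pos
    push_cast [Nat.cast_sub hpos]
    ring
  have hgram : ∑ i, ∑ j, ‖⟪(π (x i)) f, (π (x j)) f⟫_ℂ‖ ^ 2 = (n : ℝ) ^ 2 / d := by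
    rw [Finset.sum_congr rfl fun i _ => hrow i, Finset.sum_const, Finset.card_univ,
      Fintype.card_fin, nsmul_eq_mul]
    rcases Nat.lt_or_ge n 2 with h2 | h2
    · interval_cases n
      · norm_num
      · have hd1 : d = 1 := hn1 rfl
        subst hd1
        norm_num
    · have hn1R : (n : ℝ) - 1 ≠ 0 := by
        have : (2 : ℝ) ≤ n := by exact_mod_cast h2
        nlinarith
      field_simp
      ring
  have htr : ∑ j : Fin n, (‖(π (x j)) f‖ : ℝ) ^ 2 = (n : ℝ) := by
    rw [Finset.sum_congr rfl fun j _ => by rw [hvnorm (x j)], Finset.sum_const,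
      Finset.card_univ, Fintype.card_fin, nsmul_eq_mul]
    norm_num
  refine ⟨tight_of_gram hd hd0 _ hgram htr, ?_⟩
  intro i j hij
  rw [← hoff i j hij, Real.sqrt_sq (norm_nonneg _)]
end

section
/- For a single generator f ∈ L²(G): the system of right translates {R_h f}_{h∈H} is a frame with bounds A, B for its closed span if and only if for every α ∈ Ĥ the quantity ∑_{x∈Ω} |(Z_r f)(α)(x)|² lies in {0} ∪ [A, B]. -/
open scoped BigOperators

/-- The Zak transform of `f : G → ℂ` with respect to the abelian subgroup given by the
injective homomorphism `ι : H →* G`: `(Zf)(α)(x) = ∑_{h ∈ H} f(xh) α(h)`. -/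
noncomputable def Zak {G H : Type*} [Group G] [CommGroup H] [Fintype H]
    (ι : H →* G) (f : G → ℂ) (α : H →* Circle) (x : G) : ℂ :=
  ∑ h : H, f (x * ι h) * (α h : ℂ)


open scoped ComplexConjugate

set_option linter.unusedSectionVars false

namespace FrameAux

attribute [local instance 1100] Classical.propDecidable

variable {G H : Type*} [Group G] [Fintype G] [DecidableEq G] [CommGroup H] [Fintype H]

abbrev Dl (H : Type*) [CommGroup H] := AddChar (Additive H) ℂ

noncomputable def Zc (ι : H →* G) (g : G → ℂ) (ψ : Dl H) (x : G) : ℂ :=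
  ∑ h : H, g (x * ι h) * ψ (Additive.ofMul h)

lemma card_dl_aux : (Fintype.card (Additive H)) = Fintype.card H :=
  Fintype.card_congr Additive.toMul

lemma orth1 (a : Additive H) :
    ∑ ψ : Dl H, ψ a = if a = 0 then (Fintype.card H : ℂ) else 0 := by
  rw [AddChar.sum_apply_eq_ite, card_dl_aux]

lemma orth2 (ψ' ψ : Dl H) :
    ∑ k : H, ψ' (Additive.ofMul k) * conj (ψ (Additive.ofMul k)) =
      if ψ' = ψ then (Fintype.card H : ℂ) else 0 := by
  have h1 : ∀ k : H, ψ' (Additive.ofMul k) * conj (ψ (Additive.ofMul k)) =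
      (ψ' * ψ⁻¹) (Additive.ofMul k) := by
    intro k
    rw [AddChar.mul_apply, AddChar.inv_apply', AddChar.inv_apply_eq_conj]
  simp_rw [h1]
  rw [Fintype.sum_equiv (Additive.ofMul (α := H)) _ (fun a => (ψ' * ψ⁻¹) a) (fun k => rfl),
    AddChar.sum_eq_ite, card_dl_aux]
  congr 1
  rw [← AddChar.one_eq_zero, mul_inv_eq_one]

lemma conj_mul_self (z : ℂ) : conj z * z = ((‖z‖ ^ 2 : ℝ) : ℂ) := by
  rw [mul_comm, Complex.mul_conj]
  norm_cast
  rw [Complex.normSq_eq_norm_sq]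

lemma orth1' (h k : H) :
    ∑ ψ : Dl H, ψ (Additive.ofMul h) * conj (ψ (Additive.ofMul k)) =
      if h = k then (Fintype.card H : ℂ) else 0 := by
  simp_rw [← AddChar.map_neg_eq_conj, ← AddChar.map_add_eq_mul]
  rw [orth1]
  congr 1
  rw [← sub_eq_add_neg, sub_eq_zero]
  exact propext ⟨fun hh => Additive.ofMul.injective hh, fun hh => congrArg _ hh⟩

/-- Plancherel on `H`. -/
lemma planch (c : H → ℂ) :
    ∑ ψ : Dl H, ‖∑ h : H, c h * ψ (Additive.ofMul h)‖ ^ 2 =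
      (Fintype.card H : ℝ) * ∑ h : H, ‖c h‖ ^ 2 := by
  have key : ∑ ψ : Dl H, (conj (∑ h : H, c h * ψ (Additive.ofMul h)) *
        (∑ h : H, c h * ψ (Additive.ofMul h))) =
      (Fintype.card H : ℂ) * ∑ h : H, conj (c h) * c h := by
    have expand : ∀ ψ : Dl H, (conj (∑ h : H, c h * ψ (Additive.ofMul h)) *
        (∑ h : H, c h * ψ (Additive.ofMul h))) =
        ∑ k : H, ∑ h : H, (conj (c k) * c h) *
          (ψ (Additive.ofMul h) * conj (ψ (Additive.ofMul k))) := by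
      intro ψ
      rw [map_sum, Finset.sum_mul_sum]
      refine Finset.sum_congr rfl fun k _ => Finset.sum_congr rfl fun h _ => ?_
      rw [map_mul]
      ring
    simp_rw [expand]
    rw [Finset.sum_comm]
    have inner : ∀ k : H, ∑ ψ : Dl H, ∑ h : H, (conj (c k) * c h) *
        (ψ (Additive.ofMul h) * conj (ψ (Additive.ofMul k))) =
        conj (c k) * c k * (Fintype.card H : ℂ) := by
      intro k
      rw [Finset.sum_comm]
      have step : ∀ h : H, ∑ ψ : Dl H, (conj (c k) * c h) *
          (ψ (Additive.ofMul h) * conj (ψ (Additive.ofMul k))) =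
          if h = k then conj (c k) * c h * (Fintype.card H : ℂ) else 0 := by
        intro h
        rw [← Finset.mul_sum, orth1', mul_ite, mul_zero]
      simp_rw [step]
      rw [Finset.sum_ite_eq' Finset.univ k
        (fun h => conj (c k) * c h * (Fintype.card H : ℂ)), if_pos (Finset.mem_univ k)]
    simp_rw [inner]
    rw [← Finset.sum_mul]
    ring
  have key2 : ((∑ ψ : Dl H, ‖∑ h : H, c h * ψ (Additive.ofMul h)‖ ^ 2 : ℝ) : ℂ) =
      (((Fintype.card H : ℝ) * ∑ h : H, ‖c h‖ ^ 2 : ℝ) : ℂ) := by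
    rw [Complex.ofReal_sum, Complex.ofReal_mul, Complex.ofReal_sum]
    simp_rw [← conj_mul_self]
    rw [key]
    norm_num
  exact_mod_cast key2

/-- Coset decomposition of sums over `G`. -/
lemma cosets (ι : H →* G) (hι : Function.Injective ι) (Ω : Finset G)
    (hΩ : ∀ w : G, ∃! x : G, x ∈ Ω ∧ ∃ h : H, w = x * ι h)
    {M : Type*} [AddCommMonoid M] (F : G → M) :
    ∑ x : G, F x = ∑ ω ∈ Ω, ∑ h : H, F (ω * ι h) := by
  have h1 : ∑ p ∈ Ω ×ˢ Finset.univ, F (p.1 * ι p.2) = ∑ x : G, F x := by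
    refine Finset.sum_nbij (fun p => p.1 * ι p.2) ?_ ?_ ?_ ?_
    · intro p _
      exact Finset.mem_univ _
    · rintro ⟨x1, k1⟩ hp ⟨x2, k2⟩ hq (heq : x1 * ι k1 = x2 * ι k2)
      simp only [Finset.coe_product, Set.mem_prod, Finset.mem_coe, Finset.coe_univ,
        Set.mem_univ, and_true] at hp hq
      obtain ⟨x0, -, huniq⟩ := hΩ (x1 * ι k1)
      have e1 : x1 = x0 := huniq x1 ⟨hp, k1, rfl⟩
      have e2 : x2 = x0 := huniq x2 ⟨hq, k2, heq⟩
      have ex : x1 = x2 := e1.trans e2.symm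
      subst ex
      have h5 := hι (mul_left_cancel heq)
      simp [h5]
    · intro w _
      obtain ⟨x, ⟨hxΩ, h, hw⟩, -⟩ := hΩ w
      refine ⟨(x, h), ?_, hw.symm⟩
      simp only [Finset.coe_product, Set.mem_prod, Finset.mem_coe, Finset.coe_univ,
        Set.mem_univ, and_true]
      exact hxΩ
    · intro p _
      rfl
  rw [← h1, Finset.sum_product]

lemma psi_ne_zero (ψ : Dl H) (a : Additive H) : ψ a ≠ 0 := by
  intro hz
  have h1 := AddChar.norm_apply (ψ := ψ) a
  rw [hz] at h1; simp at h1

/-- Covariance of the Zak transform under right translation. -/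
lemma shift (ι : H →* G) (g : G → ℂ) (ψ : Dl H) (x : G) (k : H) :
    Zc ι g ψ (x * ι k) = conj (ψ (Additive.ofMul k)) * Zc ι g ψ x := by
  unfold Zc
  rw [Finset.mul_sum]
  refine Fintype.sum_equiv (Equiv.mulLeft k) _ _ fun h => ?_
  simp only [Equiv.coe_mulLeft]
  have e1 : x * ι k * ι h = x * ι (k * h) := by rw [map_mul, mul_assoc]
  have e2 : ψ (Additive.ofMul (k * h)) = ψ (Additive.ofMul k) * ψ (Additive.ofMul h) := by
    rw [← AddChar.map_add_eq_mul]; rfl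
  have e3 : conj (ψ (Additive.ofMul k)) * ψ (Additive.ofMul k) = 1 := by
    rw [← AddChar.inv_apply_eq_conj]
    exact inv_mul_cancel₀ (psi_ne_zero ψ _)
  rw [e1]
  calc g (x * ι (k * h)) * ψ (Additive.ofMul h)
      = (conj (ψ (Additive.ofMul k)) * ψ (Additive.ofMul k)) *
        (g (x * ι (k * h)) * ψ (Additive.ofMul h)) := by rw [e3]; ring
    _ = conj (ψ (Additive.ofMul k)) * (g (x * ι (k * h)) * ψ (Additive.ofMul (k * h))) := by
        rw [e2]; ring

/-- Zak transform of a translate. -/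
lemma genZ (ι : H →* G) (f : G → ℂ) (h : H) (ψ : Dl H) (x : G) :
    Zc ι (fun y => f (y * ι h)) ψ x = conj (ψ (Additive.ofMul h)) * Zc ι f ψ x := by
  have e : ∀ k : H, x * ι k * ι h = (x * ι h) * ι k := by
    intro k
    rw [mul_assoc, mul_assoc, ← map_mul, ← map_mul, mul_comm k h]
  calc Zc ι (fun y => f (y * ι h)) ψ x = Zc ι f ψ (x * ι h) := by
        unfold Zc
        exact Finset.sum_congr rfl fun k _ => by simp only [e k]
    _ = conj (ψ (Additive.ofMul h)) * Zc ι f ψ x := shift ι f ψ x h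

/-- The key identity: the `H`-Fourier transform of the coefficient sequence. -/
lemma key_identity (ι : H →* G) (hι : Function.Injective ι) (Ω : Finset G)
    (hΩ : ∀ w : G, ∃! x : G, x ∈ Ω ∧ ∃ h : H, w = x * ι h)
    (g f : G → ℂ) (ψ : Dl H) :
    ∑ h : H, (∑ x : G, conj (g x) * f (x * ι h)) * ψ (Additive.ofMul h) =
      ∑ ω ∈ Ω, conj (Zc ι g ψ ω) * Zc ι f ψ ω := by
  have step1 : ∑ h : H, (∑ x : G, conj (g x) * f (x * ι h)) * ψ (Additive.ofMul h) =
      ∑ x : G, conj (g x) * Zc ι f ψ x := by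
    simp_rw [Finset.sum_mul]
    rw [Finset.sum_comm]
    refine Finset.sum_congr rfl fun x _ => ?_
    unfold Zc
    rw [Finset.mul_sum]
    exact Finset.sum_congr rfl fun h _ => by ring
  rw [step1, cosets ι hι Ω hΩ]
  refine Finset.sum_congr rfl fun ω _ => ?_
  have conjZ : conj (Zc ι g ψ ω) =
      ∑ k : H, conj (g (ω * ι k)) * conj (ψ (Additive.ofMul k)) := by
    unfold Zc
    rw [map_sum]
    exact Finset.sum_congr rfl fun k _ => by rw [map_mul]
  rw [conjZ, Finset.sum_mul]
  refine Finset.sum_congr rfl fun k _ => ?_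
  rw [shift]
  ring

/-- Frame sum via the Zak transform. -/
lemma norm_translates (ι : H →* G) (hι : Function.Injective ι) (Ω : Finset G)
    (hΩ : ∀ w : G, ∃! x : G, x ∈ Ω ∧ ∃ h : H, w = x * ι h)
    (g f : EuclideanSpace ℂ G) :
    (Fintype.card H : ℝ) * ∑ h : H, ‖(inner (𝕜 := ℂ) g (WithLp.toLp 2 (fun x => f (x * ι h))) : ℂ)‖ ^ 2 =
      ∑ ψ : Dl H, ‖∑ ω ∈ Ω, conj (Zc ι (fun y => g y) ψ ω) * Zc ι (fun y => f y) ψ ω‖ ^ 2 := by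
  have hin : ∀ h : H, (inner (𝕜 := ℂ) g (WithLp.toLp 2 (fun x => f (x * ι h))) : ℂ) =
      ∑ x : G, conj (g x) * f (x * ι h) := by
    intro h
    rw [PiLp.inner_apply]
    exact Finset.sum_congr rfl fun x _ => RCLike.inner_apply' _ _
  simp_rw [hin]
  rw [← planch (fun h => ∑ x : G, conj (g x) * f (x * ι h))]
  refine Finset.sum_congr rfl fun ψ _ => ?_
  rw [key_identity ι hι Ω hΩ (fun y => g y) (fun y => f y) ψ]

/-- Norm via the Zak transform. -/
lemma norm_g (ι : H →* G) (hι : Function.Injective ι) (Ω : Finset G)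
    (hΩ : ∀ w : G, ∃! x : G, x ∈ Ω ∧ ∃ h : H, w = x * ι h)
    (g : EuclideanSpace ℂ G) :
    (Fintype.card H : ℝ) * ‖g‖ ^ 2 =
      ∑ ψ : Dl H, ∑ ω ∈ Ω, ‖Zc ι (fun y => g y) ψ ω‖ ^ 2 := by
  have h0 : ‖g‖ ^ 2 = ∑ x : G, ‖g x‖ ^ 2 := by
    rw [EuclideanSpace.norm_eq, Real.sq_sqrt]
    exact Finset.sum_nonneg fun x _ => by positivity
  rw [h0, cosets ι hι Ω hΩ (fun x => ‖g x‖ ^ 2), Finset.mul_sum, Finset.sum_comm]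
  refine Finset.sum_congr rfl fun ω _ => ?_
  rw [← planch (fun k => g (ω * ι k))]
  rfl

/-- Membership in the span of translates gives proportional Zak transforms. -/
lemma span_prop (ι : H →* G) (f : EuclideanSpace ℂ G) (g : EuclideanSpace ℂ G)
    (hg : g ∈ Submodule.span ℂ
      {v : EuclideanSpace ℂ G | ∃ h : H, v = fun x => f (x * ι h)}) (ψ : Dl H) :
    ∃ l : ℂ, ∀ x : G, Zc ι (fun y => g y) ψ x = l * Zc ι (fun y => f y) ψ x := by
  induction hg using Submodule.span_induction with
  | mem v hv =>
    obtain ⟨h, hv⟩ := hv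
    refine ⟨conj (ψ (Additive.ofMul h)), fun x => ?_⟩
    rw [hv]
    exact genZ ι (fun y => f y) h ψ x
  | zero =>
    refine ⟨0, fun x => ?_⟩
    unfold Zc
    simp
  | add u v hu hv ihu ihv =>
    obtain ⟨l1, hl1⟩ := ihu
    obtain ⟨l2, hl2⟩ := ihv
    refine ⟨l1 + l2, fun x => ?_⟩
    have : Zc ι (fun y => (u + v) y) ψ x =
        Zc ι (fun y => u y) ψ x + Zc ι (fun y => v y) ψ x := by
      unfold Zc
      rw [← Finset.sum_add_distrib]
      exact Finset.sum_congr rfl fun h _ => by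
        show (u (x * ι h) + v (x * ι h)) * ψ (Additive.ofMul h) = _
        ring
    rw [this, hl1, hl2]
    ring
  | smul a u hu ihu =>
    obtain ⟨l, hl⟩ := ihu
    refine ⟨a * l, fun x => ?_⟩
    have : Zc ι (fun y => (a • u) y) ψ x = a * Zc ι (fun y => u y) ψ x := by
      unfold Zc
      rw [Finset.mul_sum]
      exact Finset.sum_congr rfl fun h _ => by
        show (a * u (x * ι h)) * ψ (Additive.ofMul h) = _
        ring
    rw [this, hl]
    ring

lemma euc_sum_apply {ι : Type*} (s : Finset ι) (F : ι → EuclideanSpace ℂ G) (x : G) :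
    (∑ i ∈ s, F i) x = ∑ i ∈ s, F i x := by
  induction s using Finset.cons_induction with
  | empty => rfl
  | cons a s ha ih => rw [Finset.sum_cons, Finset.sum_cons, PiLp.add_apply, ih]

/-- The character of `H` into `Circle` associated to `ψ : Dl H`. -/
noncomputable def toChar (ψ : Dl H) : H →* Circle where
  toFun h := ⟨ψ (Additive.ofMul h), mem_sphere_zero_iff_norm.2 (ψ.norm_apply _)⟩
  map_one' := by
    ext : 1
    simpa using ψ.map_zero_eq_one
  map_mul' h k := by
    ext : 1
    show ψ (Additive.ofMul (h * k)) = ψ (Additive.ofMul h) * ψ (Additive.ofMul k)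
    rw [← AddChar.map_add_eq_mul]
    rfl

lemma toChar_coe (ψ : Dl H) (h : H) : (toChar ψ h : ℂ) = ψ (Additive.ofMul h) := rfl

/-- The additive character associated to `α : H →* Circle`. -/
noncomputable def ofChar (α : H →* Circle) : Dl H where
  toFun a := (α a.toMul : ℂ)
  map_zero_eq_one' := by simp
  map_add_eq_mul' a b := by
    show (α ((a + b).toMul) : ℂ) = _
    have : (a + b).toMul = a.toMul * b.toMul := rfl
    rw [this, map_mul]
    push_cast
    rfl

lemma ofChar_coe (α : H →* Circle) (h : H) :
    ofChar α (Additive.ofMul h) = (α h : ℂ) := rfl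

end FrameAux


open FrameAux

/-- Single-generator characterization: the right translates `{R_h f}_{h ∈ H}` form a frame
with bounds `A, B` for their span if and only if for every character `α` of `H`,
`∑_{x ∈ Ω} ‖(Z_r f)(α)(x)‖²` lies in `{0} ∪ [A, B]`, where `Ω` is a transversal of `G/H`. -/
theorem frame_of_translates_iff {G H : Type*} [Group G] [Fintype G] [DecidableEq G]
    [CommGroup H] [Fintype H]
    (ι : H →* G) (hι : Function.Injective ι)
    (Ω : Finset G) (hΩ : ∀ w : G, ∃! x : G, x ∈ Ω ∧ ∃ h : H, w = x * ι h)
    (f : EuclideanSpace ℂ G) (A B : ℝ) (hA : 0 < A) (hB : 0 < B) :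
    (∀ g ∈ Submodule.span ℂ
        {v : EuclideanSpace ℂ G | ∃ h : H, v = fun x => f (x * ι h)},
      A * ‖g‖ ^ 2 ≤ ∑ h : H, ‖inner (𝕜 := ℂ) g (WithLp.toLp 2 (fun x => f (x * ι h)))‖ ^ 2 ∧
        ∑ h : H, ‖inner (𝕜 := ℂ) g (WithLp.toLp 2 (fun x => f (x * ι h)))‖ ^ 2 ≤ B * ‖g‖ ^ 2) ↔
    (∀ α : H →* Circle,
      (∑ x ∈ Ω, ‖Zak ι (fun y => f y) α x‖ ^ 2) = 0 ∨
        (A ≤ ∑ x ∈ Ω, ‖Zak ι (fun y => f y) α x‖ ^ 2 ∧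
          ∑ x ∈ Ω, ‖Zak ι (fun y => f y) α x‖ ^ 2 ≤ B)) := by
  classical
  have hnpos : (0 : ℝ) < (Fintype.card H : ℝ) := by exact_mod_cast Fintype.card_pos
  set n : ℝ := (Fintype.card H : ℝ) with hndef
  set S : Dl H → ℝ := fun ψ => ∑ ω ∈ Ω, ‖Zc ι (fun y => f y) ψ ω‖ ^ 2 with hSdef
  have hSnonneg : ∀ ψ, 0 ≤ S ψ := fun ψ => Finset.sum_nonneg fun ω _ => by positivity
  have sumconj : ∀ ψ : Dl H,
      ∑ ω ∈ Ω, conj (Zc ι (fun y => f y) ψ ω) * Zc ι (fun y => f y) ψ ω = ((S ψ : ℝ) : ℂ) := by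
    intro ψ
    simp_rw [conj_mul_self]
    rw [hSdef, Complex.ofReal_sum]
  constructor
  · -- frame → spectrum
    intro hframe α
    have hZeq : ∀ x, Zak ι (fun y => f y) α x = Zc ι (fun y => f y) (ofChar α) x := fun x => rfl
    simp_rw [hZeq]
    show S (ofChar α) = 0 ∨ (A ≤ S (ofChar α) ∧ S (ofChar α) ≤ B)
    set ψ := ofChar α
    by_cases hS0 : S ψ = 0
    · exact Or.inl hS0
    right
    have hSpos : 0 < S ψ := (hSnonneg ψ).lt_of_ne (Ne.symm hS0)
    set w : EuclideanSpace ℂ G :=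
      ∑ h : H, ψ (Additive.ofMul h) • (WithLp.toLp 2 (fun x => f (x * ι h)) : EuclideanSpace ℂ G) with hwdef
    have hwmem : w ∈ Submodule.span ℂ
        {v : EuclideanSpace ℂ G | ∃ h : H, v = fun x => f (x * ι h)} :=
      Submodule.sum_mem _ fun h _ => Submodule.smul_mem _ _ (Submodule.subset_span ⟨h, rfl⟩)
    have hwx : ∀ x : G, w x = Zc ι (fun y => f y) ψ x := by
      intro x
      rw [hwdef, euc_sum_apply]
      unfold Zc
      refine Finset.sum_congr rfl fun h _ => ?_
      show ψ (Additive.ofMul h) • f (x * ι h) = f (x * ι h) * ψ (Additive.ofMul h)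
      rw [smul_eq_mul, mul_comm]
    have hZw : ∀ (ψ' : Dl H) (ω : G), Zc ι (fun y => w y) ψ' ω =
        (if ψ' = ψ then (Fintype.card H : ℂ) else 0) * Zc ι (fun y => f y) ψ ω := by
      intro ψ' ω
      have e1 : Zc ι (fun y => w y) ψ' ω =
          ∑ k : H, (conj (ψ (Additive.ofMul k)) * Zc ι (fun y => f y) ψ ω) *
            ψ' (Additive.ofMul k) := by
        show ∑ k : H, w (ω * ι k) * ψ' (Additive.ofMul k) = _
        refine Finset.sum_congr rfl fun k _ => ?_
        rw [hwx (ω * ι k), shift]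
      rw [e1, ← orth2 ψ' ψ, Finset.sum_mul]
      exact Finset.sum_congr rfl fun k _ => by ring
    have hZwpos : ∀ ω, Zc ι (fun y => w y) ψ ω =
        (Fintype.card H : ℂ) * Zc ι (fun y => f y) ψ ω := fun ω => by
      rw [hZw ψ, if_pos rfl]
    obtain ⟨hA', hB'⟩ := hframe w hwmem
    have T1 : n * ∑ h : H, ‖(inner (𝕜 := ℂ) w (WithLp.toLp 2 (fun x => f (x * ι h))) : ℂ)‖ ^ 2 =
        n ^ 2 * (S ψ) ^ 2 := by
      rw [norm_translates ι hι Ω hΩ w f]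
      have h0 : ∀ ψ' ∈ (Finset.univ : Finset (Dl H)), ψ' ≠ ψ →
          ‖∑ ω ∈ Ω, conj (Zc ι (fun y => w y) ψ' ω) * Zc ι (fun y => f y) ψ' ω‖ ^ 2 = 0 := by
        intro ψ' _ hne
        have hz : ∀ ω, Zc ι (fun y => w y) ψ' ω = 0 := fun ω => by
          rw [hZw ψ', if_neg hne, zero_mul]
        simp [hz]
      rw [Finset.sum_eq_single ψ h0 (fun hn' => absurd (Finset.mem_univ ψ) hn')]
      have e2 : ∑ ω ∈ Ω, conj (Zc ι (fun y => w y) ψ ω) * Zc ι (fun y => f y) ψ ω =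
          (Fintype.card H : ℂ) * ((S ψ : ℝ) : ℂ) := by
        simp_rw [hZwpos, map_mul, map_natCast]
        rw [← sumconj ψ, Finset.mul_sum]
        exact Finset.sum_congr rfl fun ω _ => by ring
      rw [e2, norm_mul, mul_pow, Complex.norm_natCast, Complex.norm_real,
        Real.norm_of_nonneg (hSnonneg ψ)]
    have T2 : n * ‖w‖ ^ 2 = n ^ 2 * S ψ := by
      rw [norm_g ι hι Ω hΩ w]
      have h0 : ∀ ψ' ∈ (Finset.univ : Finset (Dl H)), ψ' ≠ ψ →
          ∑ ω ∈ Ω, ‖Zc ι (fun y => w y) ψ' ω‖ ^ 2 = 0 := by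
        intro ψ' _ hne
        have hz : ∀ ω, Zc ι (fun y => w y) ψ' ω = 0 := fun ω => by
          rw [hZw ψ', if_neg hne, zero_mul]
        simp [hz]
      rw [Finset.sum_eq_single ψ h0 (fun hn' => absurd (Finset.mem_univ ψ) hn')]
      simp_rw [hZwpos, norm_mul, mul_pow, Complex.norm_natCast]
      rw [← Finset.mul_sum, hSdef]
    have hpos2 : (0 : ℝ) < n ^ 2 * S ψ := mul_pos (pow_pos hnpos 2) hSpos
    constructor
    · refine le_of_mul_le_mul_right ?_ hpos2
      calc A * (n ^ 2 * S ψ) = n * (A * ‖w‖ ^ 2) := by rw [← T2]; ring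
        _ ≤ n * ∑ h : H, ‖(inner (𝕜 := ℂ) w (WithLp.toLp 2 (fun x => f (x * ι h))) : ℂ)‖ ^ 2 :=
            mul_le_mul_of_nonneg_left hA' hnpos.le
        _ = n ^ 2 * (S ψ) ^ 2 := T1
        _ = S ψ * (n ^ 2 * S ψ) := by ring
    · refine le_of_mul_le_mul_right ?_ hpos2
      calc S ψ * (n ^ 2 * S ψ) = n ^ 2 * (S ψ) ^ 2 := by ring
        _ = n * ∑ h : H, ‖(inner (𝕜 := ℂ) w (WithLp.toLp 2 (fun x => f (x * ι h))) : ℂ)‖ ^ 2 := T1.symm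
        _ ≤ n * (B * ‖w‖ ^ 2) := mul_le_mul_of_nonneg_left hB' hnpos.le
        _ = B * (n * ‖w‖ ^ 2) := by ring
        _ = B * (n ^ 2 * S ψ) := by rw [T2]
  · -- spectrum → frame
    intro hspec g hg
    have hspec' : ∀ ψ : Dl H, S ψ = 0 ∨ (A ≤ S ψ ∧ S ψ ≤ B) := fun ψ => hspec (toChar ψ)
    choose l hl using fun ψ => span_prop ι f g hg ψ
    have T1 : n * ∑ h : H, ‖(inner (𝕜 := ℂ) g (WithLp.toLp 2 (fun x => f (x * ι h))) : ℂ)‖ ^ 2 =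
        ∑ ψ : Dl H, ‖l ψ‖ ^ 2 * (S ψ) ^ 2 := by
      rw [norm_translates ι hι Ω hΩ g f]
      refine Finset.sum_congr rfl fun ψ _ => ?_
      have e1 : ∑ ω ∈ Ω, conj (Zc ι (fun y => g y) ψ ω) * Zc ι (fun y => f y) ψ ω =
          conj (l ψ) * ((S ψ : ℝ) : ℂ) := by
        simp_rw [hl ψ, map_mul]
        rw [← sumconj ψ, Finset.mul_sum]
        exact Finset.sum_congr rfl fun ω _ => by ring
      rw [e1, norm_mul, mul_pow, RCLike.norm_conj, Complex.norm_real,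
        Real.norm_of_nonneg (hSnonneg ψ)]
    have T2 : n * ‖g‖ ^ 2 = ∑ ψ : Dl H, ‖l ψ‖ ^ 2 * S ψ := by
      rw [norm_g ι hι Ω hΩ g]
      refine Finset.sum_congr rfl fun ψ _ => ?_
      simp_rw [hl ψ, norm_mul, mul_pow]
      rw [← Finset.mul_sum, hSdef]
    constructor
    · refine le_of_mul_le_mul_left ?_ hnpos
      calc n * (A * ‖g‖ ^ 2) = A * (n * ‖g‖ ^ 2) := by ring
        _ = ∑ ψ : Dl H, A * (‖l ψ‖ ^ 2 * S ψ) := by rw [T2, Finset.mul_sum]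
        _ ≤ ∑ ψ : Dl H, ‖l ψ‖ ^ 2 * (S ψ) ^ 2 := by
            refine Finset.sum_le_sum fun ψ _ => ?_
            rcases hspec' ψ with h0 | ⟨hA1, _⟩
            · rw [h0]; simp
            · have hx : (0 : ℝ) ≤ ‖l ψ‖ ^ 2 := by positivity
              have hmul := mul_le_mul_of_nonneg_left hA1 (mul_nonneg hx (hSnonneg ψ))
              nlinarith [hmul]
        _ = n * ∑ h : H, ‖(inner (𝕜 := ℂ) g (WithLp.toLp 2 (fun x => f (x * ι h))) : ℂ)‖ ^ 2 := T1.symm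
    · refine le_of_mul_le_mul_left ?_ hnpos
      calc n * ∑ h : H, ‖(inner (𝕜 := ℂ) g (WithLp.toLp 2 (fun x => f (x * ι h))) : ℂ)‖ ^ 2
          = ∑ ψ : Dl H, ‖l ψ‖ ^ 2 * (S ψ) ^ 2 := T1
        _ ≤ ∑ ψ : Dl H, B * (‖l ψ‖ ^ 2 * S ψ) := by
            refine Finset.sum_le_sum fun ψ _ => ?_
            rcases hspec' ψ with h0 | ⟨_, hB1⟩
            · rw [h0]; simp
            · have hx : (0 : ℝ) ≤ ‖l ψ‖ ^ 2 := by positivity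
              have hmul := mul_le_mul_of_nonneg_left hB1 (mul_nonneg hx (hSnonneg ψ))
              nlinarith [hmul]
        _ = B * (n * ‖g‖ ^ 2) := by rw [T2, Finset.mul_sum]
        _ = n * (B * ‖g‖ ^ 2) := by ring
end
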